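/- Let Y be a finite elementary abelian p-group and let μ̂_1,…,μ̂_n (n ≥ 2) be nonnegative-valued characteristic functions of probability distributions μ_i on the dual group, satisfying Π_{i=1}^n μ̂_i(Σ_{j=1}^n β_{ij} u_j) = Π_{i=1}^n Π_{j=1}^n μ̂_i(β_{ij} u_j) for all u_1,…,u_n ∈ Y, where β_{ij} ∈ Aut(Y) and β_{1j} = β_{i1} = Id. Then the subgroups F_{μ_i} = {y ∈ Y : μ̂_i(y) = 1} all coincide with a single subgroup F of Y, and β_{ij}(F) = F for all i,j. -/

import Mathlib

/-- A probability distribution on a finite set, given by its mass function. -/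
def IsDist {X : Type*} [Fintype X] (μ : X → ℝ) : Prop :=
  (∀ x, 0 ≤ μ x) ∧ ∑ x, μ x = 1

/-- The characteristic function `μ̂(y) = ∑_x (x,y) μ({x})` of a distribution `μ`
on a finite abelian group `X`, where `y` is a character of `X`. -/
noncomputable def charFun {X : Type*} [AddCommGroup X] [Fintype X]
    (μ : X → ℝ) (y : AddChar X ℂ) : ℂ :=
  ∑ x, (μ x : ℂ) * y x

/-- The Haar (uniform) distribution `m_K` on a subgroup `K` of `X`. -/
noncomputable def haarDist {X : Type*} [AddCommGroup X] [Fintype X]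
    (K : AddSubgroup X) : X → ℝ :=
  (K : Set X).indicator fun _ => ((Nat.card K : ℝ))⁻¹

/-- The degenerate distribution `E_{x₀}` concentrated at `x₀`. -/
def diracDist {X : Type*} [DecidableEq X] (x₀ : X) : X → ℝ :=
  fun x => if x = x₀ then 1 else 0

/-- Convolution of two distributions on a finite abelian group. -/
noncomputable def convDist {X : Type*} [AddCommGroup X] [Fintype X]
    (μ ν : X → ℝ) : X → ℝ :=
  fun x => ∑ t, μ t * ν (x - t)

/-- `μ` is an idempotent distribution: a shift of the Haar distribution on a subgroup. -/
noncomputable def IsIdempotent {X : Type*} [AddCommGroup X] [Fintype X] [DecidableEq X]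
    (μ : X → ℝ) : Prop :=
  ∃ (K : AddSubgroup X) (x₀ : X), μ = convDist (haarDist K) (diracDist x₀)

/-- The linear forms `L_j = ∑_i A i j (ξ i)`, `j = 1,…,k`, of independent random
variables `ξ i` with distributions `μ i` are independent: the joint distribution of
`(L_1, …, L_k)` equals the product of the marginal distributions. -/
def FormsIndep {X : Type*} [AddCommGroup X] [Fintype X] [DecidableEq X] {n k : ℕ}
    (μ : Fin n → X → ℝ) (A : Fin n → Fin k → X → X) : Prop :=
  ∀ x : Fin k → X,
    (∑ t : Fin n → X, if (∀ j, ∑ i, A i j (t i) = x j) then ∏ i, μ i (t i) else 0) =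
    ∏ j, ∑ t : Fin n → X, if (∑ i, A i j (t i) = x j) then ∏ i, μ i (t i) else 0

/-- The adjoint `α̃` of an endomorphism `α` of `X`, acting on the character group:
`(α x, y) = (x, α̃ y)`. -/
noncomputable def adjChar {X : Type*} [AddCommGroup X] (α : X →+ X)
    (y : AddChar X ℂ) : AddChar X ℂ :=
  y.compAddMonoidHom α

/-- A finite product of reals in `[0,1]` equal to `1` forces every factor to be `1`. -/
lemma prod_eq_one_forall_aux {ι : Type*} [Fintype ι] (f : ι → ℝ) (h0 : ∀ i, 0 ≤ f i)
    (h1 : ∀ i, f i ≤ 1) (hp : ∏ i, f i = 1) (k : ι) : f k = 1 := by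
  classical
  refine le_antisymm (h1 k) ?_
  have h2 : f k * ∏ i ∈ Finset.univ.erase k, f i = 1 := by
    rw [Finset.mul_prod_erase Finset.univ f (Finset.mem_univ k)]
    exact hp
  have h3 : ∏ i ∈ Finset.univ.erase k, f i ≤ 1 :=
    Finset.prod_le_one (fun i _ => h0 i) (fun i _ => h1 i)
  have h4 : (0:ℝ) ≤ ∏ i ∈ Finset.univ.erase k, f i := Finset.prod_nonneg fun i _ => h0 i
  nlinarith [h0 k]

/-- ℕ-arithmetic: if `c ≤ a` pointwise, all `a` positive and `∏ a ≤ ∏ c`, then `c = a`. -/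
lemma nat_prod_forall_eq_aux {n : ℕ} (a c : Fin n → ℕ) (hpos : ∀ j, 0 < a j)
    (hle : ∀ j, c j ≤ a j) (hprod : ∏ j, a j ≤ ∏ j, c j) (k : Fin n) : c k = a k := by
  classical
  refine le_antisymm (hle k) ?_
  have hP : 0 < ∏ j ∈ Finset.univ.erase k, a j := Finset.prod_pos fun j _ => hpos j
  have h1 : a k * ∏ j ∈ Finset.univ.erase k, a j ≤ c k * ∏ j ∈ Finset.univ.erase k, a j := by
    calc a k * ∏ j ∈ Finset.univ.erase k, a j = ∏ j, a j :=
          Finset.mul_prod_erase Finset.univ a (Finset.mem_univ k)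
      _ ≤ ∏ j, c j := hprod
      _ = c k * ∏ j ∈ Finset.univ.erase k, c j :=
          (Finset.mul_prod_erase Finset.univ c (Finset.mem_univ k)).symm
      _ ≤ c k * ∏ j ∈ Finset.univ.erase k, a j :=
          Nat.mul_le_mul_left _ (Finset.prod_le_prod (fun _ _ => Nat.zero_le _) fun j _ => hle j)
  exact Nat.le_of_mul_le_mul_right h1 hP

/-- The purely group-theoretic counting part of Lemma 3: if subgroups `F i` of a finite
abelian group and automorphisms `β i j` (with identity first row and column) satisfy the
"independence of idempotents" condition, then all `F i` coincide and are invariant. -/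
theorem aux_subgroups {G : Type*} [CommGroup G] [Finite G] {n : ℕ} (i0 : Fin n)
    (F : Fin n → Subgroup G) (β : Fin n → Fin n → G ≃* G)
    (hβ1 : ∀ j, β i0 j = MulEquiv.refl G) (hβ2 : ∀ i, β i i0 = MulEquiv.refl G)
    (hclub : ∀ u : Fin n → G, (∀ i, (∏ j, β i j (u j)) ∈ F i) → ∀ i j, β i j (u j) ∈ F i) :
    (∀ i, F i = F i0) ∧ ∀ i j, (F i0).map (β i j).toMonoidHom = F i0 := by
  classical
  obtain ⟨M, hM⟩ : ∃ M : (Fin n → G) →* (Fin n → G), ∀ u i, M u i = ∏ j, β i j (u j) := by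
    refine ⟨{ toFun := fun u i => ∏ j, β i j (u j), map_one' := ?_, map_mul' := ?_ },
      fun u i => rfl⟩
    · funext i; simp
    · intro u v; funext i; simp [Finset.prod_mul_distrib]
  set B : Subgroup (Fin n → G) := Subgroup.pi Set.univ F with hB
  set V : Subgroup (Fin n → G) := B.comap M with hV
  set W : Fin n → Subgroup G := fun j => ⨅ i, (F i).comap (β i j).toMonoidHom with hW
  have hmemW : ∀ (j) (y : G), y ∈ W j ↔ ∀ i, β i j y ∈ F i := by
    intro j y
    rw [hW]
    simp only [Subgroup.mem_iInf, Subgroup.mem_comap]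
    rfl
  have hmemV : ∀ u, u ∈ V ↔ ∀ i, (∏ j, β i j (u j)) ∈ F i := by
    intro u
    rw [hV, Subgroup.mem_comap, hB, Subgroup.mem_pi]
    constructor
    · intro h i
      have := h i (Set.mem_univ i)
      rwa [hM] at this
    · intro h i _
      rw [hM]
      exact h i
  have hVW : V = Subgroup.pi Set.univ W := by
    ext u
    rw [hmemV, Subgroup.mem_pi]
    constructor
    · intro h j _
      rw [hmemW]
      intro i
      exact hclub u h i j
    · intro h i
      refine Subgroup.prod_mem (F i) fun j _ => ?_
      exact (hmemW j (u j)).mp (h j (Set.mem_univ j)) i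
  have cardpi : ∀ K : Fin n → Subgroup G,
      Nat.card (Subgroup.pi Set.univ K) = ∏ j, Nat.card (K j) := by
    intro K
    rw [← Nat.card_pi]
    refine Nat.card_congr ⟨fun u j => ⟨u.1 j, (Subgroup.mem_pi Set.univ).mp u.2 j (Set.mem_univ j)⟩,
      fun v => ⟨fun j => (v j).1, (Subgroup.mem_pi Set.univ).mpr fun j _ => (v j).2⟩,
      fun u => rfl, fun v => rfl⟩
  have hcardV : Nat.card B ≤ Nat.card V := by
    have hker : ((QuotientGroup.mk' B).comp M).ker = V := by
      rw [← MonoidHom.comap_ker, QuotientGroup.ker_mk']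
    have h3 : V.index ≤ B.index := by
      rw [← hker, Subgroup.index_ker, Subgroup.index_eq_card]
      exact Nat.card_le_card_of_injective _ Subtype.val_injective
    have h1 := Subgroup.card_mul_index V
    have h2 := Subgroup.card_mul_index B
    have hBpos : 0 < B.index := Nat.pos_of_ne_zero Subgroup.index_ne_zero_of_finite
    have h4 : Nat.card B * B.index ≤ Nat.card V * B.index := by
      calc Nat.card B * B.index = Nat.card V * V.index := by rw [h1, h2]
        _ ≤ Nat.card V * B.index := Nat.mul_le_mul_left _ h3
    exact Nat.le_of_mul_le_mul_right h4 hBpos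
  have hcomap_card : ∀ i j, Nat.card ((F i).comap (β i j).toMonoidHom) = Nat.card (F i) := by
    intro i j
    rw [Subgroup.comap_equiv_eq_map_symm']
    exact (Nat.card_congr (MulEquiv.subgroupMap (β i j).symm (F i)).toEquiv).symm
  have hc_le : ∀ i j, Nat.card (W j) ≤ Nat.card (F i) := by
    intro i j
    rw [← hcomap_card i j]
    exact Subgroup.card_le_of_le (iInf_le _ i)
  have hprodFW : ∏ i, Nat.card (F i) ≤ ∏ j, Nat.card (W j) := by
    calc ∏ i, Nat.card (F i) = Nat.card B := (cardpi F).symm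
      _ ≤ Nat.card V := hcardV
      _ = ∏ j, Nat.card (W j) := by rw [hVW, cardpi W]
  have hposF : ∀ i, 0 < Nat.card (F i) := fun i => Nat.card_pos
  have hWF : ∀ j, Nat.card (W j) = Nat.card (F j) := fun k =>
    nat_prod_forall_eq_aux (fun j => Nat.card (F j)) (fun j => Nat.card (W j)) hposF
      (fun j => hc_le j j) hprodFW k
  have hWeq : ∀ i j, W j = (F i).comap (β i j).toMonoidHom := by
    intro i j
    refine Subgroup.eq_of_le_of_card_ge (iInf_le _ i) ?_
    calc Nat.card ((F i).comap (β i j).toMonoidHom) = Nat.card (F i) := hcomap_card i j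
      _ = Nat.card (W i) := (hWF i).symm
      _ ≤ Nat.card (F j) := hc_le j i
      _ = Nat.card (W j) := (hWF j).symm
  have hrefl : (MulEquiv.refl G).toMonoidHom = MonoidHom.id G := rfl
  have hFi : ∀ i, F i = F i0 := by
    intro i
    have h := hWeq i i0
    rw [hβ2 i, hrefl, Subgroup.comap_id] at h
    have h0 := hWeq i0 i0
    rw [hβ2 i0, hrefl, Subgroup.comap_id] at h0
    rw [← h, h0]
  refine ⟨hFi, ?_⟩
  intro i j
  have h1 : (F i0).comap (β i j).toMonoidHom = F i0 := by
    have h := hWeq i j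
    rw [hFi i] at h
    have h0 := hWeq i0 j
    rw [hβ1 j, hrefl, Subgroup.comap_id] at h0
    rw [← h, ← h0]
  conv_lhs => rw [← h1]
  exact Subgroup.map_comap_eq_self_of_surjective (β i j).surjective _

open ComplexOrder in
/-- Lemma 3: `Y` (here the character group of `X`, which is elementary
abelian of exponent `p`) and nonnegative characteristic functions `μ̂_i` of probability
distributions `μ_i` satisfying the functional equation with `β_{ij} ∈ Aut(Y)`,
`β_{1j} = β_{i1} = Id`; then all `F_{μ_i}` coincide with a single subgroup `F` of `Y`
and `β_{ij}(F) = F`. (`Y` is written multiplicatively, so `∑_j β_{ij} u_j` is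
`∏_j β_{ij} (u_j)` and `{0}` is `{1}`.) -/
theorem stmt6 {X : Type*} [AddCommGroup X] [Fintype X]
    (p : ℕ) (hp : p.Prime) (helem : ∀ y : AddChar X ℂ, y ^ p = 1)
    (n : ℕ) (hn : 2 ≤ n)
    (μ : Fin n → X → ℝ) (hμ : ∀ i, IsDist (μ i))
    (hpos : ∀ i y, 0 ≤ charFun (μ i) y)
    (β : Fin n → Fin n → (AddChar X ℂ ≃* AddChar X ℂ))
    (hβ1 : ∀ j, β ⟨0, by omega⟩ j = MulEquiv.refl _)
    (hβ2 : ∀ i, β i ⟨0, by omega⟩ = MulEquiv.refl _)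
    (heq : ∀ u : Fin n → AddChar X ℂ,
      ∏ i, charFun (μ i) (∏ j, β i j (u j)) =
      ∏ i, ∏ j, charFun (μ i) (β i j (u j))) :
    ∃ F : Subgroup (AddChar X ℂ),
      (∀ i, {y | charFun (μ i) y = 1} = (F : Set (AddChar X ℂ))) ∧
      ∀ i j, F.map (β i j).toMonoidHom = F := by
  classical
  have hpow : ∀ (y : AddChar X ℂ) (x : X), y x ^ p = 1 := fun y x => by
    rw [← AddChar.pow_apply, helem, AddChar.one_apply]
  have habs : ∀ (y : AddChar X ℂ) (x : X), ‖y x‖ = 1 := fun y x => by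
    exact Complex.norm_eq_one_of_pow_eq_one (hpow y x) hp.ne_zero
  haveI hfinY : Finite (AddChar X ℂ) := by
    have hroot : ∀ (y : AddChar X ℂ) (x : X), y x ∈ (Polynomial.nthRoots p (1 : ℂ)).toFinset := by
      intro y x
      rw [Multiset.mem_toFinset, Polynomial.mem_nthRoots hp.pos]
      exact hpow y x
    exact Finite.of_injective
      (fun y : AddChar X ℂ => fun x : X =>
        (⟨y x, hroot y x⟩ : {z : ℂ // z ∈ (Polynomial.nthRoots p (1 : ℂ)).toFinset}))
      (fun y z h => DFunLike.ext _ _ fun x => congrArg Subtype.val (congrFun h x))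
  -- characterization of `charFun = 1` via the support
  have key : ∀ (i) (y : AddChar X ℂ), charFun (μ i) y = 1 ↔ ∀ x, μ i x ≠ 0 → y x = 1 := by
    intro i y
    constructor
    · intro h
      have hre : ∑ x, μ i x * (y x).re = 1 := by
        have h' := congrArg Complex.re h
        simpa [charFun, Complex.re_sum, Complex.mul_re] using h'
      have h0 : ∑ x, μ i x * (1 - (y x).re) = 0 := by
        have he : ∑ x, μ i x * (1 - (y x).re) = (∑ x, μ i x) - ∑ x, μ i x * (y x).re := by
          rw [← Finset.sum_sub_distrib]
          exact Finset.sum_congr rfl fun x _ => by ring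
        rw [he, (hμ i).2, hre, sub_self]
      have hnn : ∀ x ∈ Finset.univ, 0 ≤ μ i x * (1 - (y x).re) := by
        intro x _
        have h1 := Complex.re_le_norm (y x)
        rw [habs y x] at h1
        exact mul_nonneg ((hμ i).1 x) (by linarith)
      intro x hx
      have hz := (Finset.sum_eq_zero_iff_of_nonneg hnn).mp h0 x (Finset.mem_univ x)
      have hre1 : (y x).re = 1 := by
        rcases mul_eq_zero.mp hz with h' | h'
        · exact absurd h' hx
        · linarith
      have him0 : (y x).im = 0 := by
        have h1 := Complex.sq_norm (y x)
        rw [habs y x, Complex.normSq_apply, hre1] at h1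
        nlinarith
      rw [Complex.ext_iff]
      constructor
      · simpa using hre1
      · simpa using him0
    · intro h
      have he : ∀ x ∈ Finset.univ, (μ i x : ℂ) * y x = ((μ i x : ℝ) : ℂ) := by
        intro x _
        by_cases hx : μ i x = 0
        · simp [hx]
        · rw [h x hx, mul_one]
      rw [charFun, Finset.sum_congr rfl he, ← Complex.ofReal_sum, (hμ i).2, Complex.ofReal_one]
  -- `charFun` takes real values in `[0,1]`
  have habs1 : ∀ (i) (y : AddChar X ℂ), ‖charFun (μ i) y‖ ≤ 1 := by
    intro i y
    calc ‖charFun (μ i) y‖ ≤ ∑ x, ‖(μ i x : ℂ) * y x‖ :=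
        norm_sum_le _ _
      _ = ∑ x, μ i x := Finset.sum_congr rfl fun x _ => by
          rw [norm_mul, habs y x, mul_one, Complex.norm_real, Real.norm_eq_abs, abs_of_nonneg ((hμ i).1 x)]
      _ = 1 := (hμ i).2
  have hreal : ∀ (i) (y : AddChar X ℂ),
      charFun (μ i) y = (((charFun (μ i) y).re : ℝ) : ℂ) ∧
      0 ≤ (charFun (μ i) y).re ∧ (charFun (μ i) y).re ≤ 1 := by
    intro i y
    have h := hpos i y
    rw [Complex.le_def] at h
    obtain ⟨h1, h2⟩ := h
    simp only [Complex.zero_re, Complex.zero_im] at h1 h2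
    refine ⟨?_, h1, le_trans (Complex.re_le_norm _) (habs1 i y)⟩
    rw [Complex.ext_iff]
    constructor
    · rw [Complex.ofReal_re]
    · rw [Complex.ofReal_im]; exact h2.symm
  -- the subgroups `F i`
  obtain ⟨F, hmemF, hcoeF⟩ : ∃ F : Fin n → Subgroup (AddChar X ℂ),
      (∀ i (y : AddChar X ℂ), y ∈ F i ↔ charFun (μ i) y = 1) ∧
      (∀ i, (F i : Set (AddChar X ℂ)) = {y | charFun (μ i) y = 1}) := by
    refine ⟨fun i =>
      { carrier := {y | charFun (μ i) y = 1}
        one_mem' := ?_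
        mul_mem' := ?_
        inv_mem' := ?_ }, fun i y => Iff.rfl, fun i => rfl⟩
    · intro a b ha hb
      show charFun (μ i) (a * b) = 1
      rw [key]
      rw [Set.mem_setOf_eq, key] at ha hb
      intro x hx
      rw [AddChar.mul_apply, ha x hx, hb x hx, one_mul]
    · show charFun (μ i) 1 = 1
      rw [key]
      intro x _
      exact AddChar.one_apply x
    · intro a ha
      show charFun (μ i) a⁻¹ = 1
      rw [key]
      rw [Set.mem_setOf_eq, key] at ha
      intro x hx
      rw [AddChar.inv_apply', ha x hx, inv_one]
  -- the key combinatorial consequence of the functional equation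
  have hclub : ∀ u : Fin n → AddChar X ℂ,
      (∀ i, (∏ j, β i j (u j)) ∈ F i) → ∀ i j, β i j (u j) ∈ F i := by
    intro u hu
    have h1 : ∏ i, ∏ j, charFun (μ i) (β i j (u j)) = 1 := by
      rw [← heq u]
      exact Finset.prod_eq_one fun i _ => (hmemF i _).mp (hu i)
    have h2 : ∏ i, ∏ j, (((charFun (μ i) (β i j (u j))).re : ℝ) : ℂ) = 1 := by
      rw [← h1]
      exact Finset.prod_congr rfl fun i _ => Finset.prod_congr rfl fun j _ =>
        ((hreal i _).1).symm
    have h3 : ((∏ i, ∏ j, (charFun (μ i) (β i j (u j))).re : ℝ) : ℂ) = 1 := by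
      rw [Complex.ofReal_prod]
      rw [← h2]
      exact Finset.prod_congr rfl fun i _ => Complex.ofReal_prod _ _
    have h4 : ∏ i, ∏ j, (charFun (μ i) (β i j (u j))).re = 1 := by
      exact_mod_cast h3
    intro i j
    rw [hmemF]
    have hrow : ∏ j', (charFun (μ i) (β i j' (u j'))).re = 1 :=
      prod_eq_one_forall_aux (fun i' => ∏ j', (charFun (μ i') (β i' j' (u j'))).re)
        (fun i' => Finset.prod_nonneg fun j' _ => (hreal i' _).2.1)
        (fun i' => Finset.prod_le_one (fun j' _ => (hreal i' _).2.1)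
          (fun j' _ => (hreal i' _).2.2)) h4 i
    have hent : (charFun (μ i) (β i j (u j))).re = 1 :=
      prod_eq_one_forall_aux (fun j' => (charFun (μ i) (β i j' (u j'))).re)
        (fun j' => (hreal i _).2.1) (fun j' => (hreal i _).2.2) hrow j
    rw [(hreal i _).1, hent, Complex.ofReal_one]
  -- apply the group-theoretic part
  obtain ⟨hFi, hmap⟩ := aux_subgroups (⟨0, by omega⟩ : Fin n) F β hβ1 hβ2 hclub
  refine ⟨F ⟨0, by omega⟩, ?_, hmap⟩
  intro i
  rw [← hcoeF i, hFi i]
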